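/- For all nonnegative integers n, m and indices 0 ≤ s ≤ n, 0 ≤ i ≤ m, the coefficient identity ((-1)^{i+s} / (i! · s!)) · C(m+n, m-i) · C(n+i, n-s) = C(n+m, n) · ((-n)_s · (-m)_i / (s+i)!) · (1/(s! · i!)) holds, where (a)_k denotes the Pochhammer symbol (rising factorial). -/

import Mathlib

/-- Pochhammer symbol (rising factorial) on the reals. -/
noncomputable def poch (a : ℝ) (k : ℕ) : ℝ := ∏ i ∈ Finset.range k, (a + i)

lemma poch_neg_nat (n s : ℕ) (hs : s ≤ n) :
    poch (-(n:ℝ)) s = (-1)^s * n.factorial / (n-s).factorial := by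
  induction s with
  | zero =>
    simp only [poch, Finset.range_zero, Finset.prod_empty, pow_zero, Nat.sub_zero, one_mul]
    exact (div_self (Nat.cast_ne_zero.mpr (Nat.factorial_ne_zero _))).symm
  | succ s ih =>
    have hs' : s ≤ n := Nat.le_of_succ_le hs
    have hps : poch (-(n:ℝ)) (s+1) = poch (-(n:ℝ)) s * (-(n:ℝ) + s) := by
      simp [poch, Finset.prod_range_succ]
    have hfac : ((n-s).factorial : ℝ) = ((n-(s+1)).factorial : ℝ) * ((n:ℝ) - s) := by
      have h1 : n - s = (n - (s+1)) + 1 := by omega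
      rw [h1, Nat.factorial_succ]
      have h2 : ((n - (s+1) + 1 : ℕ) : ℝ) = (n:ℝ) - s := by
        have : (n - (s+1) + 1 : ℕ) = n - s := by omega
        rw [this, Nat.cast_sub hs']
      push_cast at h2 ⊢
      rw [h2]
      ring
    rw [hps, ih hs']
    have h3 : ((n-(s+1)).factorial : ℝ) ≠ 0 := Nat.cast_ne_zero.mpr (Nat.factorial_ne_zero _)
    have h4 : ((n-s).factorial : ℝ) ≠ 0 := Nat.cast_ne_zero.mpr (Nat.factorial_ne_zero _)
    have hne : (n:ℝ) - s ≠ 0 := by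
      have : (s:ℝ) < n := by exact_mod_cast hs
      linarith
    rw [hfac]
    field_simp [hfac, hne]
    ring

theorem stmt2 (n m s i : ℕ) (hs : s ≤ n) (hi : i ≤ m) :
    ((-1:ℝ)^(i+s) / ((Nat.factorial i) * (Nat.factorial s))) *
      ((m+n).choose (m-i)) * ((n+i).choose (n-s)) =
    ((n+m).choose n : ℝ) * (poch (-(n:ℝ)) s * poch (-(m:ℝ)) i / (Nat.factorial (s+i))) *
      (1 / ((Nat.factorial s) * (Nat.factorial i))) := by
  have h1 : m - i ≤ m + n := by omega
  have h2 : n - s ≤ n + i := by omega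
  have h3 : n ≤ n + m := by omega
  rw [Nat.cast_choose ℝ h1, Nat.cast_choose ℝ h2, Nat.cast_choose ℝ h3,
    poch_neg_nat n s hs, poch_neg_nat m i hi]
  have e1 : m + n - (m - i) = n + i := by omega
  have e2 : n + i - (n - s) = s + i := by omega
  have e3 : n + m - n = m := by omega
  rw [e1, e2, e3]
  have f : ∀ k : ℕ, ((k.factorial : ℝ)) ≠ 0 := fun k => Nat.cast_ne_zero.mpr (Nat.factorial_ne_zero _)
  have hmn : (m+n).factorial = (n+m).factorial := by rw [Nat.add_comm]
  rw [hmn]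
  field_simp
  ring
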